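/- arXiv:1206.5099 — 6 statements merged into one kernel-verified Lean document; each statement's English description precedes it below -/
import Mathlib

section
/- If T is a bounded linear operator on a complex Hilbert space and λ is an extended eigenvalue of T, then the spectra of T and λT intersect: σ(T) ∩ σ(λT) ≠ ∅. -/
open ContinuousLinearMap

section KeyLemma

variable {𝓛 : Type*} [NormedRing 𝓛] [NormedAlgebra ℂ 𝓛] [CompleteSpace 𝓛] [Nontrivial 𝓛]

/-- Rosenblum-type lemma via a bicommutant/Gelfand argument: if `L` and `R` commute and
`L - lam • R` is not a unit, then there are spectral points `ν ∈ σ(R)` with `lam * ν ∈ σ(L)`. -/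
lemma exists_spectrum_of_not_isUnit_sub (L R : 𝓛) (hcomm : L * R = R * L) (lam : ℂ)
    (hτ : ¬ IsUnit (L - lam • R)) :
    ∃ ν ∈ spectrum ℂ L, ∃ μ ∈ spectrum ℂ R, ν = lam * μ := by
  classical
  set C : Set 𝓛 := Set.centralizer {L, R} with hCdef
  set E : Subalgebra ℂ 𝓛 := Subalgebra.centralizer ℂ C with hEdef
  have hLC : L ∈ C := by
    intro m hm
    have hm' : m = L ∨ m = R := by simpa using hm
    rcases hm' with h | h <;> rw [h]
    · exact hcomm.symm
  have hRC : R ∈ C := by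
    intro m hm
    have hm' : m = L ∨ m = R := by simpa using hm
    rcases hm' with h | h <;> rw [h]
    · exact hcomm
  have hEC : (E : Set 𝓛) ⊆ C := by
    intro x hx m hm
    have hm' : m = L ∨ m = R := by simpa using hm
    rcases hm' with h | h <;> rw [h]
    · exact (Subalgebra.mem_centralizer_iff ℂ |>.mp hx L hLC)
    · exact (Subalgebra.mem_centralizer_iff ℂ |>.mp hx R hRC)
  have hLE : L ∈ E := by
    rw [Subalgebra.mem_centralizer_iff]
    intro g hg
    exact (hg L (by simp)).symm
  have hRE : R ∈ E := by
    rw [Subalgebra.mem_centralizer_iff]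
    intro g hg
    exact (hg R (by simp)).symm
  -- E is a closed commutative subalgebra
  have hclosed : IsClosed (E : Set 𝓛) := by
    have : (E : Set 𝓛) = ⋂ c ∈ C, {x : 𝓛 | c * x - x * c = 0} := by
      ext x
      simp only [hEdef, SetLike.mem_coe, Subalgebra.mem_centralizer_iff, Set.mem_iInter,
        Set.mem_setOf_eq, sub_eq_zero]
    rw [this]
    exact isClosed_biInter fun c _ =>
      isClosed_eq ((continuous_const.mul continuous_id).sub (continuous_id.mul continuous_const))
        continuous_const
  haveI : CompleteSpace E := hclosed.completeSpace_coe
  letI : NormedCommRing E :=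
    { (inferInstance : NormedRing E) with
      mul_comm := fun x y => Subtype.ext
        ((Subalgebra.mem_centralizer_iff ℂ |>.mp x.2 y.1 (hEC y.2)).symm) }
  haveI : Nontrivial E := ⟨1, 0, fun h => one_ne_zero (α := 𝓛) (by
    simpa using congrArg Subtype.val h)⟩
  -- spectrum in E is contained in spectrum in 𝓛 (inverse-closedness of bicommutant)
  have spec_sub : ∀ (a : 𝓛) (ha : a ∈ E),
      spectrum ℂ (⟨a, ha⟩ : E) ⊆ spectrum ℂ a := by
    intro a ha z hz
    by_contra hz'
    rw [spectrum.notMem_iff] at hz'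
    refine spectrum.notMem_iff.mpr ?_ hz
    obtain ⟨u, hu⟩ := hz'
    have hmem : algebraMap ℂ 𝓛 z - a ∈ E := E.sub_mem (E.algebraMap_mem z) ha
    have hinv : (↑u⁻¹ : 𝓛) ∈ E := by
      rw [Subalgebra.mem_centralizer_iff]
      intro g hg
      have h1 : g * a = a * g := Subalgebra.mem_centralizer_iff ℂ |>.mp ha g hg
      have hgu : Commute g (↑u : 𝓛) := by
        rw [Commute, SemiconjBy, hu]
        rw [mul_sub, sub_mul, h1, Algebra.commutes]
      exact (hgu.units_inv_right).eq
    refine IsUnit.of_mul_eq_one ⟨(↑u⁻¹ : 𝓛), hinv⟩ (Subtype.ext ?_)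
    show ((algebraMap ℂ E z - ⟨a, ha⟩ : E) : 𝓛) * ↑u⁻¹ = 1
    have : ((algebraMap ℂ E z - ⟨a, ha⟩ : E) : 𝓛) = algebraMap ℂ 𝓛 z - a := by
      simp
    rw [this, ← hu, Units.mul_inv]
  have hτE : L - lam • R ∈ E := E.sub_mem hLE (E.smul_mem hRE lam)
  have hτ' : ¬ IsUnit (⟨L - lam • R, hτE⟩ : E) := fun h => hτ (h.map E.val)
  obtain ⟨φ, hφ⟩ := WeakDual.CharacterSpace.exists_apply_eq_zero hτ'
  have hsplit : (⟨L - lam • R, hτE⟩ : E) = ⟨L, hLE⟩ - lam • ⟨R, hRE⟩ := rfl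
  rw [hsplit, map_sub, map_smul, smul_eq_mul, sub_eq_zero] at hφ
  exact ⟨φ ⟨L, hLE⟩, spec_sub L hLE (WeakDual.CharacterSpace.apply_mem_spectrum φ _),
    φ ⟨R, hRE⟩, spec_sub R hRE (WeakDual.CharacterSpace.apply_mem_spectrum φ _), hφ⟩

end KeyLemma


section Main

variable {H : Type*} [NormedAddCommGroup H] [InnerProductSpace ℂ H] [CompleteSpace H]
  [Nontrivial H]

local notation "A" => H →L[ℂ] H
local notation "𝓛" => (H →L[ℂ] H) →L[ℂ] (H →L[ℂ] H)

private lemma nontrivA : Nontrivial (H →L[ℂ] H) := by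
  obtain ⟨v, hv⟩ := exists_ne (0 : H)
  exact ⟨1, 0, fun h => hv (by simpa using congrFun (congrArg DFunLike.coe h) v)⟩

private lemma mulLeft_mul (a b : A) :
    ContinuousLinearMap.mul ℂ A a * ContinuousLinearMap.mul ℂ A b
      = ContinuousLinearMap.mul ℂ A (a * b) := by
  ext Y; simp [mul_apply', ContinuousLinearMap.mul_apply, mul_assoc]

private lemma mulLeft_one : ContinuousLinearMap.mul ℂ A (1 : A) = 1 := by
  ext Y; simp [mul_apply']

private lemma nontrivL : Nontrivial ((H →L[ℂ] H) →L[ℂ] (H →L[ℂ] H)) := by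
  haveI : Nontrivial (H →L[ℂ] H) := nontrivA
  exact ⟨1, 0, fun h => one_ne_zero (α := H →L[ℂ] H)
    (by simpa using congrFun (congrArg DFunLike.coe h) 1)⟩

private lemma spectrum_mulLeft_subset (T : A) :
    spectrum ℂ (ContinuousLinearMap.mul ℂ A T) ⊆ spectrum ℂ T := by
  intro z hz
  by_contra hz'
  rw [spectrum.notMem_iff] at hz'
  refine spectrum.notMem_iff.mpr ?_ hz
  obtain ⟨u, hu⟩ := hz'
  have key : algebraMap ℂ 𝓛 z - ContinuousLinearMap.mul ℂ A T
      = ContinuousLinearMap.mul ℂ A (algebraMap ℂ A z - T) := by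
    ext Y
    simp [Algebra.algebraMap_eq_smul_one, mul_apply', sub_mul, smul_mul_assoc]
  rw [key, ← hu]
  exact ⟨⟨ContinuousLinearMap.mul ℂ A ↑u, ContinuousLinearMap.mul ℂ A ↑u⁻¹,
    by rw [mulLeft_mul, Units.mul_inv, mulLeft_one],
    by rw [mulLeft_mul, Units.inv_mul, mulLeft_one]⟩, rfl⟩

private lemma mulRight_mul (a b : A) :
    (ContinuousLinearMap.mul ℂ A).flip a * (ContinuousLinearMap.mul ℂ A).flip b
      = (ContinuousLinearMap.mul ℂ A).flip (b * a) := by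
  ext Y; simp [mul_apply', ContinuousLinearMap.mul_apply, mul_assoc]

private lemma mulRight_one : (ContinuousLinearMap.mul ℂ A).flip (1 : A) = 1 := by
  ext Y; simp [mul_apply']

private lemma spectrum_mulRight_subset (T : A) :
    spectrum ℂ ((ContinuousLinearMap.mul ℂ A).flip T) ⊆ spectrum ℂ T := by
  intro z hz
  by_contra hz'
  rw [spectrum.notMem_iff] at hz'
  refine spectrum.notMem_iff.mpr ?_ hz
  obtain ⟨u, hu⟩ := hz'
  have key : algebraMap ℂ 𝓛 z - (ContinuousLinearMap.mul ℂ A).flip T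
      = (ContinuousLinearMap.mul ℂ A).flip (algebraMap ℂ A z - T) := by
    ext Y
    simp [Algebra.algebraMap_eq_smul_one, mul_apply', mul_sub, mul_smul_comm]
  rw [key, ← hu]
  exact ⟨⟨(ContinuousLinearMap.mul ℂ A).flip ↑u, (ContinuousLinearMap.mul ℂ A).flip ↑u⁻¹,
    by rw [mulRight_mul, Units.inv_mul, mulRight_one],
    by rw [mulRight_mul, Units.mul_inv, mulRight_one]⟩, rfl⟩

end Main

/-- If `T` is a bounded operator on a (nonzero) complex Hilbert space and
`λ` is an extended eigenvalue of `T` (i.e. `T X = λ • X T` for some nonzero bounded `X`),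
then `σ(T) ∩ σ(λ T) ≠ ∅`. -/
theorem spectra_intersect_of_extended_eigenvalue
    {H : Type*} [NormedAddCommGroup H] [InnerProductSpace ℂ H] [CompleteSpace H]
    [Nontrivial H] (T : H →L[ℂ] H) (lam : ℂ)
    (hlam : ∃ X : H →L[ℂ] H, X ≠ 0 ∧ T ∘L X = lam • (X ∘L T)) :
    (spectrum ℂ T ∩ spectrum ℂ (lam • T)).Nonempty := by
  haveI : Nontrivial (H →L[ℂ] H) := nontrivA
  obtain ⟨X, hX, hXT⟩ := hlam
  rw [← ContinuousLinearMap.mul_def, ← ContinuousLinearMap.mul_def] at hXT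
  rcases eq_or_ne lam 0 with rfl | hlam0
  · -- λ = 0 : T * X = 0, X ≠ 0, so T is not a unit and 0 ∈ σ(T) ∩ σ(0)
    have hT0 : T * X = 0 := by rw [hXT, zero_smul]
    have hTnu : ¬ IsUnit T := by
      rintro ⟨u, rfl⟩
      apply hX
      calc X = ↑u⁻¹ * (↑u * X) := by rw [← mul_assoc, Units.inv_mul, one_mul]
      _ = 0 := by rw [hT0, mul_zero]
    refine ⟨0, (spectrum.zero_mem_iff ℂ).mpr hTnu, ?_⟩
    rw [zero_smul, spectrum.zero_eq]
    rfl
  · set L : (H →L[ℂ] H) →L[ℂ] (H →L[ℂ] H) := ContinuousLinearMap.mul ℂ (H →L[ℂ] H) T with hLdef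
    set R : (H →L[ℂ] H) →L[ℂ] (H →L[ℂ] H) := (ContinuousLinearMap.mul ℂ (H →L[ℂ] H)).flip T
      with hRdef
    have hcomm : L * R = R * L := by
      ext Y
      simp [hLdef, hRdef, mul_apply', ContinuousLinearMap.mul_apply, mul_assoc]
    haveI : Nontrivial ((H →L[ℂ] H) →L[ℂ] (H →L[ℂ] H)) := nontrivL
    have hτ : ¬ IsUnit (L - lam • R) := by
      have h0 : (L - lam • R) X = 0 := by
        simp only [ContinuousLinearMap.sub_apply, ContinuousLinearMap.smul_apply, hLdef, hRdef,
          mul_apply', ContinuousLinearMap.flip_apply, hXT, sub_self]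
      rintro ⟨u, hu⟩
      apply hX
      have h1 : ((↑u⁻¹ * ↑u : (H →L[ℂ] H) →L[ℂ] (H →L[ℂ] H))) X = X := by
        rw [Units.inv_mul]; rfl
      have h2 : ((↑u⁻¹ * ↑u : (H →L[ℂ] H) →L[ℂ] (H →L[ℂ] H))) X
          = (↑u⁻¹ : (H →L[ℂ] H) →L[ℂ] (H →L[ℂ] H)) ((↑u : (H →L[ℂ] H) →L[ℂ] (H →L[ℂ] H)) X) :=
        rfl
      rw [h2, hu, h0, map_zero] at h1
      exact h1.symm
    obtain ⟨ν, hνL, μ, hμR, hνμ⟩ := exists_spectrum_of_not_isUnit_sub L R hcomm lam hτ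
    refine ⟨ν, spectrum_mulLeft_subset T hνL, ?_⟩
    have hμT : μ ∈ spectrum ℂ T := spectrum_mulRight_subset T hμR
    have hsmul : (Units.mk0 lam hlam0) • μ ∈ spectrum ℂ ((Units.mk0 lam hlam0) • T) :=
      spectrum.smul_mem_smul_iff.mpr hμT
    rw [hνμ]
    simpa [Units.smul_def] using hsmul
end

section
/- Let T be a non-invertible linear operator on a finite-dimensional complex Hilbert space H. Then every complex number λ is an extended eigenvalue of T. -/
/-- If `T` is a non-invertible operator on a finite-dimensional complex
Hilbert space `H` (of dimension `≥ 1`), then every `λ ∈ ℂ` is an extended eigenvalue of `T`. -/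
theorem extended_spectrum_eq_univ_of_not_invertible
    {H : Type*} [NormedAddCommGroup H] [InnerProductSpace ℂ H]
    [FiniteDimensional ℂ H] [Nontrivial H] (T : H →L[ℂ] H)
    (hT : ¬ IsUnit T) (lam : ℂ) :
    ∃ X : H →L[ℂ] H, X ≠ 0 ∧ T ∘L X = lam • (X ∘L T) := by
  -- T is not injective
  have hinj : ¬ Function.Injective T := by
    intro hinj
    have hbij : Function.Bijective T :=
      ⟨hinj, (LinearMap.injective_iff_surjective (f := T.toLinearMap)).mp hinj⟩
    let e : H ≃L[ℂ] H :=
      (LinearEquiv.ofBijective T.toLinearMap hbij).toContinuousLinearEquiv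
    have hTe : (e : H →L[ℂ] H) = T := by ext x; rfl
    exact hT ⟨⟨T, e.symm.toContinuousLinearMap,
      by rw [← hTe]; ext x; simp,
      by rw [← hTe]; ext x; simp⟩, rfl⟩
  -- get v ≠ 0 with T v = 0
  have hker : LinearMap.ker T.toLinearMap ≠ ⊥ := by
    intro h
    exact hinj (LinearMap.ker_eq_bot.mp h)
  obtain ⟨v, hvmem, hv0⟩ := Submodule.exists_mem_ne_zero_of_ne_bot hker
  have hTv : T v = 0 := hvmem
  -- T is not surjective
  have hsurj : ¬ Function.Surjective T := fun hs =>
    hinj ((LinearMap.injective_iff_surjective (f := T.toLinearMap)).mpr hs)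
  have hrange : LinearMap.range (T.toLinearMap) ≠ ⊤ := by
    intro h
    exact hsurj (LinearMap.range_eq_top.mp h)
  have horth : (LinearMap.range T.toLinearMap)ᗮ ≠ ⊥ := by
    intro h
    exact hrange (Submodule.orthogonal_eq_bot_iff.mp h)
  obtain ⟨w, hwmem, hw0⟩ := Submodule.exists_mem_ne_zero_of_ne_bot horth
  refine ⟨(innerSL ℂ w).smulRight v, ?_, ?_⟩
  · intro h
    have := congrFun (congrArg DFunLike.coe h) w
    simp only [ContinuousLinearMap.smulRight_apply, innerSL_apply_apply,
      ContinuousLinearMap.zero_apply, smul_eq_zero] at this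
    rcases this with h1 | h1
    · exact hw0 (inner_self_eq_zero.mp h1)
    · exact hv0 h1
  · ext u
    have hwTu : inner ℂ w (T u) = (0 : ℂ) := inner_eq_zero_symm.mp (hwmem (T u) ⟨u, rfl⟩)
    simp [hTv, hwTu]
end

section
/- Let T be a linear operator on a finite-dimensional complex Hilbert space H. Then the set of extended eigenvalues of T equals {λ ∈ ℂ : σ(T) ∩ σ(λT) ≠ ∅}. -/
open Polynomial

/-- If `f * x = x * g` then `aeval f p * x = x * aeval g p`. -/
lemma aeval_intertwine {A : Type*} [Ring A] [Algebra ℂ A] (f g x : A)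
    (h : f * x = x * g) (p : ℂ[X]) :
    Polynomial.aeval f p * x = x * Polynomial.aeval g p := by
  induction p using Polynomial.induction_on' with
  | add p q hp hq => simp [map_add, add_mul, mul_add, hp, hq]
  | monomial n a =>
      have hpow : ∀ n : ℕ, f ^ n * x = x * g ^ n := by
        intro n
        induction n with
        | zero => simp
        | succ n ih => rw [pow_succ, pow_succ, mul_assoc, h, ← mul_assoc, ih, mul_assoc]
      simp only [Polynomial.aeval_monomial]
      rw [mul_assoc, hpow, ← mul_assoc, Algebra.commutes a x, mul_assoc]

/-- For a monic polynomial all of whose roots give units, `aeval f p` is a unit. -/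
lemma aeval_isUnit {A : Type*} [Ring A] [Algebra ℂ A] [Nontrivial A] (f : A) (p : ℂ[X])
    (hm : p.Monic) (hroots : ∀ a ∈ p.roots, IsUnit (algebraMap ℂ A a - f)) :
    IsUnit (Polynomial.aeval f p) := by
  have hsplit : p = (p.roots.map fun a => X - C a).prod :=
    (IsAlgClosed.splits p).eq_prod_roots_of_monic hm
  rw [hsplit]
  have key : ∀ s : Multiset ℂ, (∀ a ∈ s, IsUnit (algebraMap ℂ A a - f)) →
      IsUnit (Polynomial.aeval f (s.map fun a => X - C a).prod) := by
    intro s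
    induction s using Multiset.induction_on with
    | empty => intro _; simp
    | cons a s ih =>
      intro hr
      rw [Multiset.map_cons, Multiset.prod_cons, map_mul]
      have h1 : IsUnit (f - algebraMap ℂ A a) := by
        simpa [neg_sub] using (hr a (Multiset.mem_cons_self a s)).neg
      have h2 : Polynomial.aeval f (X - C a) = f - algebraMap ℂ A a := by simp
      exact (h2 ▸ h1).mul (ih fun b hb => hr b (Multiset.mem_cons_of_mem hb))
  exact key p.roots hroots

/-- Sylvester-type lemma: intertwiner between operators with disjoint spectra is zero. -/
lemma intertwiner_eq_zero {V : Type*} [AddCommGroup V] [Module ℂ V]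
    [FiniteDimensional ℂ V] [Nontrivial V] (f g x : Module.End ℂ V)
    (hcomm : f * x = x * g) (hdisj : spectrum ℂ f ∩ spectrum ℂ g = ∅) : x = 0 := by
  have hgi : IsIntegral ℂ g := Algebra.IsIntegral.isIntegral g
  set p := minpoly ℂ g with hp
  have hmon : p.Monic := minpoly.monic hgi
  have haev : Polynomial.aeval g p = 0 := minpoly.aeval ℂ g
  have hcomm' := aeval_intertwine f g x hcomm p
  rw [haev, mul_zero] at hcomm'
  have hunit : IsUnit (Polynomial.aeval f p) := by
    apply aeval_isUnit f p hmon
    intro a ha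
    have h1 : g.HasEigenvalue a :=
      Module.End.hasEigenvalue_iff_isRoot.mpr (Polynomial.isRoot_of_mem_roots ha)
    have h2 : a ∈ spectrum ℂ g := h1.mem_spectrum
    have h3 : a ∉ spectrum ℂ f := by
      intro h
      have : a ∈ spectrum ℂ f ∩ spectrum ℂ g := ⟨h, h2⟩
      rw [hdisj] at this
      exact this
    exact spectrum.notMem_iff.mp h3
  obtain ⟨u, hu⟩ := hunit
  calc x = ↑u⁻¹ * (↑u * x) := by rw [← mul_assoc, Units.inv_mul, one_mul]
    _ = 0 := by rw [hu, hcomm', mul_zero]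

/-- For an operator `T` on a finite-dimensional complex Hilbert space
(of dimension `≥ 1`), the set of extended eigenvalues of `T` equals
`{λ ∈ ℂ : σ(T) ∩ σ(λT) ≠ ∅}`. -/
theorem extended_spectrum_eq_of_finiteDimensional
    {H : Type*} [NormedAddCommGroup H] [InnerProductSpace ℂ H]
    [FiniteDimensional ℂ H] [Nontrivial H] (T : H →L[ℂ] H) :
    {lam : ℂ | ∃ X : H →L[ℂ] H, X ≠ 0 ∧ T ∘L X = lam • (X ∘L T)}
      = {lam : ℂ | (spectrum ℂ T ∩ spectrum ℂ (lam • T)).Nonempty} := by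
  classical
  let e : (H →ₗ[ℂ] H) ≃ₐ[ℂ] (H →L[ℂ] H) := Module.End.toContinuousLinearMap (𝕜 := ℂ) H
  set t : Module.End ℂ H := (T : H →ₗ[ℂ] H) with htdef
  have het : e t = T := by ext x; rfl
  have ht : spectrum ℂ T = spectrum ℂ t := by
    rw [← het]; exact AlgEquiv.spectrum_eq e t
  have hs : ∀ lam : ℂ, spectrum ℂ (lam • T) = spectrum ℂ (lam • t) := by
    intro lam
    have : e (lam • t) = lam • T := by rw [map_smul, het]
    rw [← this]; exact AlgEquiv.spectrum_eq e (lam • t)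
  ext lam
  simp only [Set.mem_setOf_eq]
  constructor
  · rintro ⟨X, hX, hTX⟩
    by_contra hempty
    rw [Set.not_nonempty_iff_eq_empty, ht, hs] at hempty
    apply hX
    have hco : t * (X : H →ₗ[ℂ] H) = (X : H →ₗ[ℂ] H) * (lam • t) := by
      have := congrArg ContinuousLinearMap.toLinearMap hTX
      simp only [ContinuousLinearMap.coe_comp, ContinuousLinearMap.coe_smul] at this
      rw [mul_smul_comm]
      exact this
    have := intertwiner_eq_zero t (lam • t) (X : H →ₗ[ℂ] H) hco hempty
    exact ContinuousLinearMap.coe_injective this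
  · rintro ⟨μ, hμT, hμS⟩
    rw [ht] at hμT
    rw [hs] at hμS
    have h1 : t.HasEigenvalue μ := Module.End.HasEigenvalue.of_mem_spectrum hμT
    obtain ⟨u, hu⟩ := h1.exists_hasEigenvector
    have hTu : T u = μ • u := hu.apply_eq_smul
    have h2 : (lam • t).HasEigenvalue μ := Module.End.HasEigenvalue.of_mem_spectrum hμS
    obtain ⟨w, hw⟩ := h2.exists_hasEigenvector
    set d : Module.End ℂ H := lam • t - μ • 1 with hddef
    have hdw : d w = 0 := by
      have := hw.apply_eq_smul
      simp [hddef, this]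
    have hnsurj : ¬ Function.Surjective d := by
      intro hsurj
      have hinj := LinearMap.injective_iff_surjective.mpr hsurj
      exact hw.2 (hinj (by simp [hdw]))
    have hrange : LinearMap.range d ≠ ⊤ := by rwa [Ne, LinearMap.range_eq_top]
    have horth : (LinearMap.range d)ᗮ ≠ ⊥ := by
      intro h
      exact hrange (Submodule.orthogonal_eq_bot_iff.mp h)
    obtain ⟨v, hv_mem, hv_ne⟩ := Submodule.exists_mem_ne_zero_of_ne_bot horth
    have hv : ∀ w' : H, inner ℂ v (d w') = (0 : ℂ) :=
      fun w' => (Submodule.mem_orthogonal' _ v).mp hv_mem (d w') (LinearMap.mem_range_self d w')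
    have hkey : ∀ w' : H, lam * inner ℂ v (T w') = μ * inner (𝕜 := ℂ) v w' := by
      intro w'
      have := hv w'
      simp only [hddef, LinearMap.sub_apply, LinearMap.smul_apply, Module.End.one_apply,
        inner_sub_right, inner_smul_right, sub_eq_zero] at this
      exact this
    refine ⟨(innerSL ℂ v).smulRight u, ?_, ?_⟩
    · intro h0
      have h1 : (inner ℂ v v : ℂ) • u = 0 := by
        have := ContinuousLinearMap.ext_iff.mp h0 v
        simpa using this
      rcases smul_eq_zero.mp h1 with h | h
      · exact hv_ne (inner_self_eq_zero.mp h)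
      · exact hu.2 h
    · ext w'
      simp only [ContinuousLinearMap.comp_apply, ContinuousLinearMap.smul_apply,
        ContinuousLinearMap.smulRight_apply, innerSL_apply_apply, map_smul, hTu]
      rw [smul_comm, ← smul_assoc, ← smul_assoc]
      congr 1
      simp only [smul_eq_mul]
      exact (hkey w').symm
end

section
/- Let T be an invertible linear operator on a finite-dimensional complex Hilbert space. Then the set of extended eigenvalues of T equals {α/β : α, β ∈ σ(T)}, the set of ratios of eigenvalues of T. -/
/-- If `T` is an invertible operator on a finite-dimensional complex
Hilbert space (of dimension `≥ 1`), then the set of extended eigenvalues of `T` is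
`{α/β : α, β ∈ σ(T)}`. -/
theorem extended_spectrum_eq_ratios_of_invertible
    {H : Type*} [NormedAddCommGroup H] [InnerProductSpace ℂ H]
    [FiniteDimensional ℂ H] [Nontrivial H] (T : H →L[ℂ] H) (hT : IsUnit T) :
    {lam : ℂ | ∃ X : H →L[ℂ] H, X ≠ 0 ∧ T ∘L X = lam • (X ∘L T)}
      = {lam : ℂ | ∃ α ∈ spectrum ℂ T, ∃ β ∈ spectrum ℂ T, lam = α / β} := by
  classical
  haveI : CompleteSpace H := FiniteDimensional.complete ℂ H
  set A : Module.End ℂ H := (T : H →ₗ[ℂ] H) with hA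
  have hspec : spectrum ℂ T = spectrum ℂ A := by
    have h1 := AlgEquiv.spectrum_eq (Module.End.toContinuousLinearMap (𝕜 := ℂ) H) A
    have h2 : (Module.End.toContinuousLinearMap (𝕜 := ℂ) H) A = T := rfl
    rw [h2] at h1
    exact h1
  have hmem : ∀ μ : ℂ, μ ∈ spectrum ℂ T ↔ Module.End.HasEigenvalue A μ := by
    intro μ
    rw [hspec, Module.End.hasEigenvalue_iff_mem_spectrum]
  -- eigenvalue from an explicit eigenvector
  have heig : ∀ (μ : ℂ) (x : H), x ≠ 0 → T x = μ • x → μ ∈ spectrum ℂ T := by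
    intro μ x hx hTx
    rw [hmem]
    exact Module.End.hasEigenvalue_of_hasEigenvector
      ⟨Module.End.mem_eigenspace_iff.mpr hTx, hx⟩
  have hzero : (0 : ℂ) ∉ spectrum ℂ T := (spectrum.zero_notMem_iff ℂ).mpr hT
  have hTinj : Function.Injective T := by
    obtain ⟨U, rfl⟩ := hT
    intro a b h
    have h2 : ∀ x : H, ((U⁻¹ : (H →L[ℂ] H)ˣ) : H →L[ℂ] H) ((U : H →L[ℂ] H) x) = x := by
      intro x
      have hcomp : ((U⁻¹ : (H →L[ℂ] H)ˣ) : H →L[ℂ] H) ∘L (U : H →L[ℂ] H) = 1 := by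
        rw [← ContinuousLinearMap.mul_def, Units.inv_mul]
      calc ((U⁻¹ : (H →L[ℂ] H)ˣ) : H →L[ℂ] H) ((U : H →L[ℂ] H) x)
          = (((U⁻¹ : (H →L[ℂ] H)ˣ) : H →L[ℂ] H) ∘L (U : H →L[ℂ] H)) x := rfl
        _ = x := by rw [hcomp]; rfl
    have h1 : ((U⁻¹ : (H →L[ℂ] H)ˣ) : H →L[ℂ] H) ((U : H →L[ℂ] H) a)
        = ((U⁻¹ : (H →L[ℂ] H)ˣ) : H →L[ℂ] H) ((U : H →L[ℂ] H) b) := by rw [h]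
    rw [h2 a, h2 b] at h1
    exact h1
  ext lam
  simp only [Set.mem_setOf_eq]
  constructor
  · rintro ⟨X, hX, hTX⟩
    have happ : ∀ w : H, T (X w) = lam • X (T w) := by
      intro w
      have := congrArg (fun (f : H →L[ℂ] H) => f w) hTX
      simpa using this
    -- lam ≠ 0
    have hlam0 : lam ≠ 0 := by
      intro h
      apply hX
      ext w
      have h1 := happ w
      rw [h, zero_smul] at h1
      have h2 : X w = 0 := hTinj (by simpa using h1)
      simpa using h2
    -- find a generalized eigenvector not killed by X
    have htop := Module.End.iSup_maxGenEigenspace_eq_top A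
    have hex : ∃ (β : ℂ) (v : H), v ∈ A.maxGenEigenspace β ∧ X v ≠ 0 := by
      by_contra hcon
      push_neg at hcon
      apply hX
      ext w
      have hw : w ∈ ⨆ μ : ℂ, A.maxGenEigenspace μ := by rw [htop]; trivial
      rw [ContinuousLinearMap.zero_apply]
      refine Submodule.iSup_induction (motive := fun x => X x = 0) _ hw ?_ ?_ ?_
      · intro μ x hx; exact hcon μ x hx
      · simp
      · intro x y hx hy; simp [hx, hy]
    obtain ⟨β, v, hv, hXv⟩ := hex
    have hv0 : v ≠ 0 := fun h => hXv (by simp [h])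
    set N : Module.End ℂ H := A - β • 1 with hN
    have hNapp : ∀ x : H, N x = T x - β • x := by
      intro x
      simp [hN, hA]
    obtain ⟨k, hk⟩ := (Module.End.mem_maxGenEigenspace A β v).mp hv
    have hNk : (N ^ k) v = 0 := by
      have : A - β • 1 = A - β • (1 : Module.End ℂ H) := rfl
      exact hk
    -- β is an eigenvalue of T
    have hβspec : β ∈ spectrum ℂ T := by
      have hexp : ∃ q, (N ^ q) v = 0 := ⟨k, hNk⟩
      set p := Nat.find hexp with hp
      have hps : (N ^ p) v = 0 := Nat.find_spec hexp
      have hp0 : p ≠ 0 := by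
        intro h
        rw [h, pow_zero] at hps
        exact hv0 hps
      have hlt : p - 1 < p := Nat.sub_lt (Nat.pos_of_ne_zero hp0) one_pos
      have hmin : (N ^ (p - 1)) v ≠ 0 := Nat.find_min hexp hlt
      have hstep : N ((N ^ (p - 1)) v) = (N ^ p) v := by
        rw [← Module.End.mul_apply, ← pow_succ',
          Nat.sub_add_cancel (Nat.one_le_iff_ne_zero.mpr hp0)]
      refine heig β ((N ^ (p - 1)) v) hmin ?_
      have h0 : T ((N ^ (p - 1)) v) - β • ((N ^ (p - 1)) v) = 0 := by
        rw [← hNapp, hstep, hps]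
      rw [sub_eq_zero] at h0
      exact h0
    have hβ0 : β ≠ 0 := fun h => hzero (h ▸ hβspec)
    -- find w with X w ≠ 0 and X (N w) = 0
    have hexp2 : ∃ m, X ((N ^ m) v) = 0 := ⟨k, by rw [hNk]; simp⟩
    set m := Nat.find hexp2 with hm
    have hms : X ((N ^ m) v) = 0 := Nat.find_spec hexp2
    have hm0 : m ≠ 0 := by
      intro h
      rw [h, pow_zero] at hms
      exact hXv hms
    have hlt : m - 1 < m := Nat.sub_lt (Nat.pos_of_ne_zero hm0) one_pos
    set w := (N ^ (m - 1)) v with hw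
    have hXw : X w ≠ 0 := Nat.find_min hexp2 hlt
    have hstep : N w = (N ^ m) v := by
      rw [hw, ← Module.End.mul_apply, ← pow_succ',
        Nat.sub_add_cancel (Nat.one_le_iff_ne_zero.mpr hm0)]
    -- T (X w) = (lam * β) • X w
    have hkey : T (X w) = (lam * β) • X w := by
      have h1 : T w = N w + β • w := by rw [hNapp]; abel
      have h2 : X (T w) = β • X w := by
        rw [h1, map_add, hstep, hms, map_smul, zero_add]
      rw [happ w, h2, smul_smul]
    have hαspec : lam * β ∈ spectrum ℂ T := heig (lam * β) (X w) hXw hkey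
    exact ⟨lam * β, hαspec, β, hβspec, by field_simp⟩
  · rintro ⟨α, hα, β, hβ, rfl⟩
    have hβ0 : β ≠ 0 := fun h => hzero (h ▸ hβ)
    -- eigenvector u for α
    obtain ⟨u, hu⟩ := ((hmem α).mp hα).exists_hasEigenvector
    have hu0 : u ≠ 0 := hu.right
    have hTu : T u = α • u := Module.End.mem_eigenspace_iff.mp hu.left
    -- eigenvector v for adjoint of T with eigenvalue conj β
    obtain ⟨v', hv'⟩ := ((hmem β).mp hβ).exists_hasEigenvector
    have hTv' : T v' = β • v' := Module.End.mem_eigenspace_iff.mp hv'.left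
    set S : H →L[ℂ] H := T - β • 1 with hS
    have hSapp : ∀ x : H, S x = T x - β • x := by intro x; simp [hS]
    have hSnotinj : ¬ Function.Injective (S : H →ₗ[ℂ] H) := by
      intro hinj
      apply hv'.right
      have : S v' = S 0 := by
        rw [hSapp, hTv', sub_self, map_zero]
      exact hinj this
    have hSnotsurj : ¬ Function.Surjective (S : H →ₗ[ℂ] H) := by
      intro hsurj
      exact hSnotinj ((LinearMap.injective_iff_surjective).mpr hsurj)
    set K : Submodule ℂ H := LinearMap.range (S : H →ₗ[ℂ] H) with hK
    have hKne : K ≠ ⊤ := by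
      intro h
      exact hSnotsurj (LinearMap.range_eq_top.mp h)
    have hKbot : Kᗮ ≠ ⊥ := by
      intro h
      exact hKne (Submodule.orthogonal_eq_bot_iff.mp h)
    obtain ⟨v, hvK, hv0⟩ := Submodule.exists_mem_ne_zero_of_ne_bot hKbot
    have hvorth : ∀ x : H, inner ℂ (S x) v = (0 : ℂ) := by
      intro x
      exact (Submodule.mem_orthogonal K v).mp hvK (S x) ⟨x, rfl⟩
    have hinner : ∀ x : H, inner ℂ (T x) v = (starRingEnd ℂ) β * inner ℂ x v := by
      intro x
      have h1 := hvorth x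
      rw [hSapp, inner_sub_left, inner_smul_left, sub_eq_zero] at h1
      exact h1
    have hadj : ContinuousLinearMap.adjoint T v = (starRingEnd ℂ) β • v := by
      refine ext_inner_left ℂ ?_
      intro x
      rw [ContinuousLinearMap.adjoint_inner_right, hinner, inner_smul_right]
    -- the rank-one operator X w = ⟪v, w⟫ • u
    set X : H →L[ℂ] H := (innerSL ℂ v).smulRight u with hXdef
    have hXapp : ∀ w : H, X w = (inner ℂ v w : ℂ) • u := by
      intro w
      simp [hXdef]
    refine ⟨X, ?_, ?_⟩
    · intro h
      have : X v = 0 := by rw [h]; rfl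
      rw [hXapp] at this
      exact hu0 (by
        have hvv : (inner ℂ v v : ℂ) ≠ 0 := inner_self_ne_zero.mpr hv0
        exact (smul_eq_zero.mp this).resolve_left hvv)
    · ext w
      have hvTw : (inner ℂ v (T w) : ℂ) = β * inner ℂ v w := by
        have h := ContinuousLinearMap.adjoint_inner_left T w v
        rw [hadj, inner_smul_left, Complex.conj_conj] at h
        exact h.symm
      simp only [ContinuousLinearMap.comp_apply, ContinuousLinearMap.smul_apply,
        hXapp, map_smul, hTu, hvTw, smul_smul]
      congr 1
      field_simp
end

section
/- Let T be an operator on a finite-dimensional complex Hilbert space. Then the set of extended eigenvalues of T equals {1} if and only if σ(T) = {α} for some nonzero α ∈ ℂ. -/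
open Polynomial in
/-- If the spectrum of an endomorphism of a finite-dimensional complex space is `{α}`,
then `f - α` is nilpotent. -/
lemma aux_nilpotent_of_spectrum_singleton {H : Type*} [AddCommGroup H] [Module ℂ H]
    [FiniteDimensional ℂ H] (f : Module.End ℂ H) {α : ℂ}
    (h : spectrum ℂ f = {α}) :
    IsNilpotent (f - algebraMap ℂ (Module.End ℂ H) α) := by
  have hint : IsIntegral ℂ f := Algebra.IsIntegral.isIntegral f
  have hm : (minpoly ℂ f).Monic := minpoly.monic hint
  have hs : (minpoly ℂ f).Splits := IsAlgClosed.splits _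
  have hroots : (minpoly ℂ f).roots = Multiset.replicate (minpoly ℂ f).roots.card α := by
    rw [Multiset.eq_replicate]
    refine ⟨rfl, fun r hr => ?_⟩
    have : Module.End.HasEigenvalue f r :=
      Module.End.hasEigenvalue_iff_isRoot.mpr (isRoot_of_mem_roots hr)
    have : r ∈ spectrum ℂ f := Module.End.hasEigenvalue_iff_mem_spectrum.mp this
    rw [h] at this
    exact this
  have hp : minpoly ℂ f = (X - C α) ^ (minpoly ℂ f).roots.card := by
    conv_lhs => rw [hs.eq_prod_roots_of_monic hm]
    rw [hroots, Multiset.map_replicate, Multiset.prod_replicate, Multiset.card_replicate]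
  refine ⟨(minpoly ℂ f).roots.card, ?_⟩
  have := minpoly.aeval ℂ f
  rw [hp] at this
  simpa [sub_eq_add_neg] using this

/-- Elements of the spectrum of a continuous linear map on a finite-dimensional space
are eigenvalues. -/
lemma aux_exists_eigenvector {H : Type*} [NormedAddCommGroup H] [NormedSpace ℂ H]
    [FiniteDimensional ℂ H] (T : H →L[ℂ] H) {μ : ℂ} (h : μ ∈ spectrum ℂ T) :
    ∃ u : H, u ≠ 0 ∧ T u = μ • u := by
  have he : (Module.End.toContinuousLinearMap (𝕜 := ℂ) H) (↑T : H →ₗ[ℂ] H) = T := rfl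
  have hspec : spectrum ℂ (↑T : Module.End ℂ H) = spectrum ℂ T := by
    conv_rhs => rw [← he]
    exact (AlgEquiv.spectrum_eq (Module.End.toContinuousLinearMap (𝕜 := ℂ) H) _).symm
  have hμ : Module.End.HasEigenvalue (↑T : Module.End ℂ H) μ :=
    Module.End.hasEigenvalue_iff_mem_spectrum.mpr (hspec ▸ h)
  obtain ⟨v, hv⟩ := hμ.exists_hasEigenvector
  exact ⟨v, hv.2, Module.End.mem_eigenspace_iff.mp hv.1⟩

/-- For an operator `T` on a finite-dimensional complex Hilbert space
(of dimension `≥ 1`), the set of extended eigenvalues of `T` is `{1}` if and only if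
`σ(T) = {α}` for some nonzero `α`. -/
theorem extended_spectrum_eq_singleton_one_iff
    {H : Type*} [NormedAddCommGroup H] [InnerProductSpace ℂ H]
    [FiniteDimensional ℂ H] [Nontrivial H] (T : H →L[ℂ] H) :
    {lam : ℂ | ∃ X : H →L[ℂ] H, X ≠ 0 ∧ T ∘L X = lam • (X ∘L T)} = {1}
      ↔ ∃ α : ℂ, α ≠ 0 ∧ spectrum ℂ T = {α} := by
  have hcomp : ∀ A B : H →L[ℂ] H, A ∘L B = A * B := fun _ _ => rfl
  constructor
  · intro hE
    -- main claim: any two spectral values, with ν ≠ 0, give μ/ν ∈ E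
    have key : ∀ μ ν : ℂ, μ ∈ spectrum ℂ T → ν ∈ spectrum ℂ T →
        ∃ X : H →L[ℂ] H, X ≠ 0 ∧ (T ∘L X = μ • X ∧ X ∘L T = ν • X) := by
      intro μ ν hμ hν
      obtain ⟨u, hu, hTu⟩ := aux_exists_eigenvector T hμ
      have hν' : (starRingEnd ℂ) ν ∈ spectrum ℂ (star T) := by
        rw [spectrum.map_star]
        exact Set.star_mem_star.mpr hν
      obtain ⟨w, hw, hTw⟩ := aux_exists_eigenvector (star T) hν'
      have hadj : ContinuousLinearMap.adjoint T w = (starRingEnd ℂ) ν • w := by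
        rw [← ContinuousLinearMap.star_eq_adjoint]; exact hTw
      refine ⟨(innerSL ℂ w).smulRight u, ?_, ?_, ?_⟩
      · intro hX
        have : ((innerSL ℂ w).smulRight u) w = 0 := by rw [hX]; rfl
        simp only [ContinuousLinearMap.smulRight_apply, innerSL_apply_apply] at this
        rcases smul_eq_zero.mp this with h | h
        · exact hw (inner_self_eq_zero.mp h)
        · exact hu h
      · ext x
        simp only [ContinuousLinearMap.coe_comp', Function.comp_apply,
          ContinuousLinearMap.smulRight_apply, innerSL_apply_apply, ContinuousLinearMap.smul_apply,
          map_smul, hTu]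
        rw [smul_comm]
      · ext x
        have hin : (inner ℂ w (T x) : ℂ) = ν * inner ℂ w x := by
          rw [← ContinuousLinearMap.adjoint_inner_left, hadj, inner_smul_left]
          simp
        simp only [ContinuousLinearMap.coe_comp', Function.comp_apply,
          ContinuousLinearMap.smulRight_apply, innerSL_apply_apply, ContinuousLinearMap.smul_apply,
          hin, mul_smul]
    -- 0 is not in the spectrum
    have h0 : (0 : ℂ) ∉ spectrum ℂ T := by
      intro h0
      obtain ⟨X, hX, hTX, hXT⟩ := key 0 0 h0 h0
      have h2 : (2 : ℂ) ∈ {lam : ℂ | ∃ X : H →L[ℂ] H, X ≠ 0 ∧ T ∘L X = lam • (X ∘L T)} :=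
        ⟨X, hX, by rw [hTX, hXT]; simp⟩
      rw [hE] at h2
      exact absurd (Set.mem_singleton_iff.mp h2) (by norm_num)
    -- the spectrum is nonempty
    obtain ⟨α, hα⟩ := spectrum.nonempty T
    refine ⟨α, fun h => h0 (h ▸ hα), ?_⟩
    ext μ
    simp only [Set.mem_singleton_iff]
    constructor
    · intro hμ
      have hνne : α ≠ 0 := fun h => h0 (h ▸ hα)
      obtain ⟨X, hX, hTX, hXT⟩ := key μ α hμ hα
      have hmem : μ / α ∈ {lam : ℂ | ∃ X : H →L[ℂ] H, X ≠ 0 ∧ T ∘L X = lam • (X ∘L T)} := by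
        refine ⟨X, hX, ?_⟩
        rw [hTX, hXT, smul_smul, div_mul_cancel₀ _ hνne]
      rw [hE] at hmem
      have : μ / α = 1 := Set.mem_singleton_iff.mp hmem
      field_simp at this
      exact this
    · rintro rfl; exact hα
  · rintro ⟨α, hα, hspec⟩
    ext lam
    simp only [Set.mem_setOf_eq, Set.mem_singleton_iff]
    constructor
    · rintro ⟨X, hX, hTX⟩
      rw [hcomp, hcomp] at hTX
      by_contra hne
      -- T is invertible
      have hTunit : IsUnit T := by
        rw [← spectrum.zero_notMem_iff ℂ]
        rw [hspec]
        simpa using (Ne.symm hα)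
      -- lam ≠ 0
      have hlam0 : lam ≠ 0 := by
        rintro rfl
        apply hX
        rw [zero_smul] at hTX
        obtain ⟨S, hS⟩ := hTunit.exists_left_inv
        calc X = 1 * X := (one_mul X).symm
          _ = S * (T * X) := by rw [← mul_assoc, hS]
          _ = 0 := by rw [hTX, mul_zero]
      -- T - α is nilpotent
      have hnil : IsNilpotent (T - algebraMap ℂ (H →L[ℂ] H) α) := by
        have he : (Module.End.toContinuousLinearMap (𝕜 := ℂ) H) (↑T : H →ₗ[ℂ] H) = T := rfl
        have hspec' : spectrum ℂ (↑T : Module.End ℂ H) = {α} := by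
          rw [← hspec]
          conv_rhs => rw [← he]
          exact (AlgEquiv.spectrum_eq (Module.End.toContinuousLinearMap (𝕜 := ℂ) H) _).symm
        have := (aux_nilpotent_of_spectrum_singleton (↑T : Module.End ℂ H) hspec').map
          (Module.End.toContinuousLinearMap (𝕜 := ℂ) H : Module.End ℂ H →+* (H →L[ℂ] H))
        simpa [he] using this
      obtain ⟨n, hn⟩ := hnil
      -- semiconjugacy: X * (lam • T - α) = (T - α) * X
      have hsemi : SemiconjBy X (lam • T - algebraMap ℂ (H →L[ℂ] H) α)
          (T - algebraMap ℂ (H →L[ℂ] H) α) := by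
        unfold SemiconjBy
        rw [mul_sub, sub_mul, hTX]
        congr 1
        · ext x
          simp [ContinuousLinearMap.smul_apply]
        · exact (Algebra.commutes α X).symm
      have hpow := hsemi.pow_right n
      rw [SemiconjBy, hn, zero_mul] at hpow
      -- lam • T - α is a unit
      have hBunit : IsUnit (lam • T - algebraMap ℂ (H →L[ℂ] H) α) := by
        have hmem : (α / lam) ∉ spectrum ℂ T := by
          rw [hspec]
          simp only [Set.mem_singleton_iff]
          intro hcon
          apply hne
          rw [div_eq_iff hlam0] at hcon
          exact mul_left_cancel₀ hα (by rw [mul_one]; exact hcon.symm)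
        have hunit := spectrum.notMem_iff.mp hmem
        have hfac : lam • T - algebraMap ℂ (H →L[ℂ] H) α
            = (algebraMap ℂ (H →L[ℂ] H) (-lam)) * (algebraMap ℂ (H →L[ℂ] H) (α / lam) - T) := by
          have hc : (-lam) * (α / lam) = -α := by field_simp
          rw [mul_sub, ← map_mul, hc, map_neg, ← Algebra.smul_def, neg_smul, neg_sub_neg]
        rw [hfac]
        exact ((isUnit_iff_ne_zero.mpr (neg_ne_zero.mpr hlam0)).map
          (algebraMap ℂ (H →L[ℂ] H))).mul hunit
      have hBn : IsUnit ((lam • T - algebraMap ℂ (H →L[ℂ] H) α) ^ n) := hBunit.pow n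
      obtain ⟨S, hS⟩ := hBn.exists_right_inv
      apply hX
      calc X = X * ((lam • T - algebraMap ℂ (H →L[ℂ] H) α) ^ n * S) := by rw [hS, mul_one]
        _ = 0 := by rw [← mul_assoc, hpow, zero_mul]
    · rintro rfl
      exact ⟨1, one_ne_zero, by rw [hcomp, hcomp, mul_one, one_mul, one_smul]⟩
end

section
/- Let T be an operator on a finite-dimensional complex Hilbert space. Then the set of extended eigenvalues of T is all of ℂ if and only if 0 ∈ σ(T). -/
/-- For an operator `T` on a finite-dimensional complex Hilbert space
(of dimension `≥ 1`), the set of extended eigenvalues of `T` is all of `ℂ` if and only if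
`0 ∈ σ(T)`. -/
theorem extended_spectrum_eq_univ_iff
    {H : Type*} [NormedAddCommGroup H] [InnerProductSpace ℂ H]
    [FiniteDimensional ℂ H] [Nontrivial H] (T : H →L[ℂ] H) :
    {lam : ℂ | ∃ X : H →L[ℂ] H, X ≠ 0 ∧ T ∘L X = lam • (X ∘L T)} = Set.univ
      ↔ (0 : ℂ) ∈ spectrum ℂ T := by
  constructor
  · intro h
    by_contra h0
    rw [spectrum.notMem_iff] at h0
    simp only [map_zero, zero_sub, IsUnit.neg_iff] at h0
    have hinj : Function.Injective T := (ContinuousLinearMap.isUnit_iff_bijective.mp h0).1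
    have h0mem : (0:ℂ) ∈ {lam : ℂ | ∃ X : H →L[ℂ] H, X ≠ 0 ∧ T ∘L X = lam • (X ∘L T)} := by
      rw [h]; trivial
    obtain ⟨X, hX, hTX⟩ := h0mem
    rw [zero_smul] at hTX
    apply hX
    ext x
    have : T (X x) = T 0 := by
      have := congrArg (fun f => (f : H →L[ℂ] H) x) hTX
      simpa using this
    simpa using hinj this
  · intro h0
    rw [spectrum.mem_iff] at h0
    simp only [map_zero, zero_sub, IsUnit.neg_iff] at h0
    have hnb : ¬ Function.Bijective T := fun hb =>
      h0 (ContinuousLinearMap.isUnit_iff_bijective.mpr hb)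
    have hni : ¬ Function.Injective (T : H →ₗ[ℂ] H) := by
      intro hi
      exact hnb ⟨hi, LinearMap.injective_iff_surjective.mp hi⟩
    -- kernel vector v
    obtain ⟨v, hv0, hTv⟩ : ∃ v : H, v ≠ 0 ∧ T v = 0 := by
      rw [← LinearMap.ker_eq_bot] at hni
      obtain ⟨v, hvmem, hv0⟩ := Submodule.exists_mem_ne_zero_of_ne_bot hni
      exact ⟨v, hv0, hvmem⟩
    -- cokernel vector w
    have hns : ¬ Function.Surjective (T : H →ₗ[ℂ] H) := fun hs =>
      hni (LinearMap.injective_iff_surjective.mpr hs)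
    have hrange : LinearMap.range (T : H →ₗ[ℂ] H) ≠ ⊤ := by
      rwa [Ne, LinearMap.range_eq_top]
    obtain ⟨w, hwmem, hw0⟩ : ∃ w : H, w ∈ (LinearMap.range (T : H →ₗ[ℂ] H))ᗮ ∧ w ≠ 0 := by
      by_contra hc
      push_neg at hc
      apply hrange
      rw [← Submodule.orthogonal_eq_bot_iff]
      · exact (Submodule.eq_bot_iff _).mpr fun w hw => hc w hw
    have hw : ∀ x : H, inner (𝕜 := ℂ) w (T x) = 0 := by
      intro x
      have := (Submodule.mem_orthogonal _ _).mp hwmem (T x) ⟨x, rfl⟩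
      simpa [inner_eq_zero_symm] using this
    set X : H →L[ℂ] H := (innerSL ℂ w).smulRight v with hXdef
    have hXw : X w = (inner (𝕜 := ℂ) w w) • v := by simp [hXdef]
    apply Set.eq_univ_of_forall
    intro lam
    refine ⟨X, ?_, ?_⟩
    · intro hX
      apply hv0
      have : X w = 0 := by rw [hX]; rfl
      rw [hXw] at this
      exact (smul_eq_zero.mp this).resolve_left (by simpa using hw0)
    · ext x
      simp [hXdef, hTv, hw x]
end
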